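/- For every integer i ≥ 1, every k ∈ ℕ, every ρ ∈ (0,1), every u ≥ 0, all reals γ, δ, and every radius ρ < r < 1, the contour integral 𝒥_{i,k} satisfies 𝒥_{i,k}(u,γ,δ,ρ) = (δ²/2)^{k+i−1} / Γ(k+i) · Φ₃(i, k+i; ρ·δ²/2, (u²/2)·(γ²δ²/2)). -/

import Mathlib

open MeasureTheory Real Finset

/-- The confluent hypergeometric (Horn) function of two variables `Φ₃`. -/
noncomputable def Phi3 (b c x y : ℝ) : ℝ :=
  ∑' j : ℕ, ∑' n : ℕ,
    (ascPochhammer ℝ j).eval b /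
      ((ascPochhammer ℝ (j + n)).eval c * (j.factorial : ℝ) * (n.factorial : ℝ)) *
      x ^ j * y ^ n

/-- The contour integral `𝒥_{i,k}(u,γ,δ,ρ)` over the circle of radius `r`. -/
noncomputable def Jik (i k : ℕ) (u γ δ ρ r : ℝ) : ℂ :=
  (2 * Real.pi * Complex.I)⁻¹ *
    ∮ p in C(0, r), (p - (ρ : ℂ)) ^ (-(i : ℤ)) * p ^ (-(k : ℤ)) *
      Complex.exp ((u : ℂ) ^ 2 * (γ : ℂ) ^ 2 / (2 * p)) * Complex.exp ((δ : ℂ) ^ 2 * p / 2)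

namespace JikAux

/-- Real coefficient of the final double series. -/
noncomputable def Jterm (i' k : ℕ) (ρ a b : ℝ) (q : ℕ × ℕ) : ℝ :=
  ((q.1 + i').choose i' : ℝ) * ρ ^ q.1 * (a ^ q.2 / (Nat.factorial q.2 : ℝ)) *
    (b ^ (q.1 + q.2 + k + i') / (Nat.factorial (q.1 + q.2 + k + i') : ℝ))

/-- Complex coefficient of the triple Laurent expansion. -/
noncomputable def Jcc (i' : ℕ) (ρ a b : ℝ) (w : (ℕ × ℕ) × ℕ) : ℂ :=
  ((w.1.1 + i').choose i' : ℂ) * (ρ : ℂ) ^ w.1.1 *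
    ((a : ℂ) ^ w.1.2 / (Nat.factorial w.1.2 : ℂ)) *
    ((b : ℂ) ^ w.2 / (Nat.factorial w.2 : ℂ))

/-- Exponent of `p` in the triple Laurent expansion. -/
def Jee (i' k : ℕ) (w : (ℕ × ℕ) × ℕ) : ℤ :=
  (w.2 : ℤ) - (w.1.1 + w.1.2 + k + i' + 1)

lemma Jcc_eq_ofReal (i' k : ℕ) (ρ a b : ℝ) (q : ℕ × ℕ) :
    Jcc i' ρ a b (q, q.1 + q.2 + k + i') = ((Jterm i' k ρ a b q : ℝ) : ℂ) := by
  simp only [Jcc, Jterm]; push_cast; ring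

set_option maxHeartbeats 1000000 in
lemma hasSum_term (i' k : ℕ) (ρ a b r : ℝ) (hρ0 : 0 < ρ) (hρr : ρ < r)
    (ha : 0 ≤ a) (hb : 0 ≤ b) (p : ℂ) (hp : ‖p‖ = r) :
    HasSum (fun w : (ℕ × ℕ) × ℕ => Jcc i' ρ a b w * p ^ Jee i' k w)
      ((p - (ρ : ℂ)) ^ (-((i' + 1 : ℕ) : ℤ)) * p ^ (-(k : ℤ)) *
        Complex.exp ((a : ℂ) / p) * Complex.exp ((b : ℂ) * p)) := by
  have hr0 : 0 < r := hρ0.trans hρr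
  have hp0 : p ≠ 0 := by
    intro h; rw [h, norm_zero] at hp; exact hr0.ne hp
  have hpn : ‖p‖ = r := hp
  set F1 : ℕ → ℂ := fun m => ((m + i').choose i' : ℂ) * ((ρ : ℂ) / p) ^ m with hF1
  set F2 : ℕ → ℂ := fun j => ((a : ℂ) * p⁻¹) ^ j / (Nat.factorial j : ℂ) with hF2
  set F3 : ℕ → ℂ := fun n => ((b : ℂ) * p) ^ n / (Nat.factorial n : ℂ) with hF3
  have hq : ‖(ρ : ℂ) / p‖ < 1 := by
    rw [norm_div, Complex.norm_real, Real.norm_eq_abs, abs_of_pos hρ0, hpn,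
      div_lt_one hr0]; exact hρr
  have h1 : HasSum F1 (1 / (1 - (ρ : ℂ) / p) ^ (i' + 1)) :=
    hasSum_choose_mul_geometric_of_norm_lt_one i' hq
  have h2 : HasSum F2 (Complex.exp ((a : ℂ) * p⁻¹)) := by
    rw [Complex.exp_eq_exp_ℂ]; exact NormedSpace.expSeries_div_hasSum_exp _
  have h3 : HasSum F3 (Complex.exp ((b : ℂ) * p)) := by
    rw [Complex.exp_eq_exp_ℂ]; exact NormedSpace.expSeries_div_hasSum_exp _
  have hn1 : Summable fun m : ℕ => ‖F1 m‖ := by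
    have hlt : ‖(ρ / r : ℝ)‖ < 1 := by
      rw [Real.norm_eq_abs, abs_of_pos (by positivity), div_lt_one hr0]; exact hρr
    refine (summable_choose_mul_geometric_of_norm_lt_one (R := ℝ) i' hlt).congr fun m => ?_
    rw [hF1, norm_mul, norm_pow, norm_div, Complex.norm_natCast, Complex.norm_real,
      Real.norm_eq_abs, abs_of_pos hρ0, hpn]
  have hn2 : Summable fun j : ℕ => ‖F2 j‖ := by
    refine (Real.summable_pow_div_factorial ‖(a : ℂ) * p⁻¹‖).congr fun j => ?_
    rw [hF2, norm_div, norm_pow, Complex.norm_natCast]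
  have hn3 : Summable fun n : ℕ => ‖F3 n‖ := by
    refine (Real.summable_pow_div_factorial ‖(b : ℂ) * p‖).congr fun n => ?_
    rw [hF3, norm_div, norm_pow, Complex.norm_natCast]
  have hs12 : Summable (fun x : ℕ × ℕ => F1 x.1 * F2 x.2) :=
    summable_mul_of_summable_norm (f := F1) (g := F2) hn1 hn2
  have h12 : HasSum (fun x : ℕ × ℕ => F1 x.1 * F2 x.2)
      (1 / (1 - (ρ : ℂ) / p) ^ (i' + 1) * Complex.exp ((a : ℂ) * p⁻¹)) :=
    h1.mul h2 hs12
  have hn12 : Summable fun x : ℕ × ℕ => ‖F1 x.1 * F2 x.2‖ :=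
    Summable.mul_norm (f := F1) (g := F2) hn1 hn2
  have hs123 : Summable (fun w : (ℕ × ℕ) × ℕ => (F1 w.1.1 * F2 w.1.2) * F3 w.2) :=
    summable_mul_of_summable_norm (f := fun x : ℕ × ℕ => F1 x.1 * F2 x.2) (g := F3) hn12 hn3
  have h123 : HasSum (fun w : (ℕ × ℕ) × ℕ => (F1 w.1.1 * F2 w.1.2) * F3 w.2)
      (1 / (1 - (ρ : ℂ) / p) ^ (i' + 1) * Complex.exp ((a : ℂ) * p⁻¹) *
        Complex.exp ((b : ℂ) * p)) :=
    h12.mul h3 hs123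
  have h := h123.mul_right (p ^ (-((k + i' + 1 : ℕ) : ℤ)))
  have hfeq : (fun w : (ℕ × ℕ) × ℕ =>
      (F1 w.1.1 * F2 w.1.2) * F3 w.2 * p ^ (-((k + i' + 1 : ℕ) : ℤ))) =
      (fun w : (ℕ × ℕ) × ℕ => Jcc i' ρ a b w * p ^ Jee i' k w) := by
    funext w
    obtain ⟨⟨m, j⟩, n⟩ := w
    simp only [hF1, hF2, hF3, Jcc, Jee]
    rw [show ((n : ℤ) - ((m : ℤ) + (j : ℤ) + (k : ℤ) + (i' : ℤ) + 1)) =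
      (n : ℤ) + (-(m : ℤ) + (-(j : ℤ)) + (-((k + i' + 1 : ℕ) : ℤ))) from by push_cast; ring]
    rw [zpow_add₀ hp0, zpow_add₀ hp0, zpow_add₀ hp0, zpow_natCast, zpow_neg, zpow_neg,
      zpow_natCast, zpow_natCast]
    simp only [zpow_neg, zpow_natCast, inv_pow]
    field_simp
    have hm : p ^ m * p⁻¹ ^ m = 1 := by rw [← mul_pow, mul_inv_cancel₀ hp0, one_pow]
    have hj : p ^ j * p⁻¹ ^ j = 1 := by rw [← mul_pow, mul_inv_cancel₀ hp0, one_pow]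
    linear_combination (((m + i').choose i' : ℂ) * (ρ : ℂ) ^ m * p ^ n * (a : ℂ) ^ j *
      (b : ℂ) ^ n * ((j.factorial : ℂ))⁻¹ * ((n.factorial : ℂ))⁻¹) * (p ^ j * p⁻¹ ^ j * hm + hj)
  have hseq : 1 / (1 - (ρ : ℂ) / p) ^ (i' + 1) * Complex.exp ((a : ℂ) * p⁻¹) *
      Complex.exp ((b : ℂ) * p) * p ^ (-((k + i' + 1 : ℕ) : ℤ)) =
      (p - (ρ : ℂ)) ^ (-((i' + 1 : ℕ) : ℤ)) * p ^ (-(k : ℤ)) *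
        Complex.exp ((a : ℂ) / p) * Complex.exp ((b : ℂ) * p) := by
    have hsub : p - (ρ : ℂ) = p * (1 - (ρ : ℂ) / p) := by
      field_simp
    have hne : (1 : ℂ) - (ρ : ℂ) / p ≠ 0 := by
      intro h0
      have h0' : p - (ρ : ℂ) = 0 := by rw [hsub, h0, mul_zero]
      have hpρ : p = (ρ : ℂ) := by linear_combination h0'
      rw [hpρ, Complex.norm_real, Real.norm_eq_abs, abs_of_pos hρ0] at hpn
      exact absurd hpn hρr.ne
    have hfactor : (p - (ρ : ℂ)) ^ (-((i' + 1 : ℕ) : ℤ)) =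
        1 / ((1 - (ρ : ℂ) / p) ^ (i' + 1)) * (p ^ (i' + 1))⁻¹ := by
      rw [hsub, mul_zpow, zpow_neg, zpow_neg, zpow_natCast, zpow_natCast, one_div]
      ring
    rw [hfactor, div_eq_mul_inv (a : ℂ) p, zpow_neg, zpow_natCast, zpow_neg, zpow_natCast]
    rw [show k + i' + 1 = k + (i' + 1) from by omega, pow_add]
    ring
  rw [hfeq, hseq] at h
  exact h

lemma integral_term (i' k : ℕ) (ρ a b r : ℝ) (hr0 : 0 < r) (w : (ℕ × ℕ) × ℕ) :
    (∮ z in C(0, r), Jcc i' ρ a b w * z ^ Jee i' k w) =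
      if Jee i' k w = -1 then Jcc i' ρ a b w * (2 * Real.pi * Complex.I) else 0 := by
  rw [circleIntegral.integral_const_mul]
  by_cases h : Jee i' k w = -1
  · rw [if_pos h, h]
    have hz : (fun z : ℂ => z ^ (-1 : ℤ)) = fun z : ℂ => (z - 0)⁻¹ := by
      funext z; simp
    rw [show (∮ z in C(0, r), z ^ (-1 : ℤ)) = ∮ z in C(0, r), (z - 0)⁻¹ from by rw [← hz]]
    rw [circleIntegral.integral_sub_inv_of_mem_ball (by simpa using hr0)]
  · rw [if_neg h]
    have hz : (fun z : ℂ => z ^ Jee i' k w) = fun z : ℂ => (z - 0) ^ Jee i' k w := by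
      funext z; simp
    rw [show (∮ z in C(0, r), z ^ Jee i' k w) = ∮ z in C(0, r), (z - 0) ^ Jee i' k w from by
      rw [← hz], circleIntegral.integral_sub_zpow_of_ne h, mul_zero]

set_option maxHeartbeats 1000000 in
lemma lhs_eq (i' k : ℕ) (ρ a b r : ℝ) (hρ0 : 0 < ρ) (hρr : ρ < r)
    (ha : 0 ≤ a) (hb : 0 ≤ b) :
    (2 * Real.pi * Complex.I)⁻¹ *
      (∮ p in C(0, r), (p - (ρ : ℂ)) ^ (-((i' + 1 : ℕ) : ℤ)) * p ^ (-(k : ℤ)) *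
        Complex.exp ((a : ℂ) / p) * Complex.exp ((b : ℂ) * p)) =
      ∑' q : ℕ × ℕ, ((Jterm i' k ρ a b q : ℝ) : ℂ) := by
  have hr0 : 0 < r := hρ0.trans hρr
  have hcm : ∀ θ : ℝ, ‖circleMap 0 r θ‖ = r := fun θ => by
    rw [norm_circleMap_zero, abs_of_pos hr0]
  have hne0 : ∀ θ : ℝ, circleMap 0 r θ ≠ 0 := fun θ h => by
    have h2 := hcm θ; rw [h, norm_zero] at h2; exact hr0.ne h2
  set G : ((ℕ × ℕ) × ℕ) → ℝ → ℂ := fun w θ =>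
    deriv (circleMap 0 r) θ • (Jcc i' ρ a b w * circleMap 0 r θ ^ Jee i' k w) with hG
  set creal : ((ℕ × ℕ) × ℕ) → ℝ := fun w =>
    ((w.1.1 + i').choose i' : ℝ) * ρ ^ w.1.1 * (a ^ w.1.2 / (Nat.factorial w.1.2 : ℝ)) *
      (b ^ w.2 / (Nat.factorial w.2 : ℝ)) with hcreal
  have hccre : ∀ w, Jcc i' ρ a b w = ((creal w : ℝ) : ℂ) := fun w => by
    simp only [Jcc, hcreal]; push_cast; ring
  have hcnn : ∀ w, 0 ≤ creal w := fun w => by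
    simp only [hcreal]; positivity
  have habs_r : ‖((r : ℝ) : ℂ)‖ = r := by
    rw [Complex.norm_real, Real.norm_eq_abs, abs_of_pos hr0]
  have hsum_r := (hasSum_term i' k ρ a b r hρ0 hρr ha hb ((r : ℝ) : ℂ) habs_r).summable
  have hterm_r : ∀ w, Jcc i' ρ a b w * ((r : ℝ) : ℂ) ^ Jee i' k w =
      (((creal w * r ^ Jee i' k w : ℝ)) : ℂ) := fun w => by
    rw [hccre w, ← Complex.ofReal_zpow, ← Complex.ofReal_mul]
  have hM : Summable (fun w => creal w * r ^ Jee i' k w) := by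
    rw [← Complex.summable_ofReal]
    exact hsum_r.congr hterm_r
  have hGmeas : ∀ w, AEStronglyMeasurable (G w) (volume.restrict (Set.Ioc 0 (2 * π))) := by
    intro w
    apply Continuous.aestronglyMeasurable
    have hd : Continuous (deriv (circleMap 0 r)) := by
      have : deriv (circleMap 0 r) = fun θ => circleMap 0 r θ * Complex.I :=
        funext (deriv_circleMap 0 r)
      rw [this]; exact (continuous_circleMap 0 r).mul continuous_const
    exact hd.smul (continuous_const.mul
      ((continuous_circleMap 0 r).zpow₀ _ fun θ => Or.inl (hne0 θ)))
  have hGnorm : ∀ w θ, ‖G w θ‖ = r * (creal w * r ^ Jee i' k w) := by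
    intro w θ
    simp only [hG]
    rw [norm_smul, deriv_circleMap, norm_mul, Complex.norm_I, norm_mul, norm_zpow,
      hcm, hccre w, Complex.norm_real, Real.norm_eq_abs,
      abs_of_nonneg (hcnn w)]
    ring
  have hGlint : ∀ w, (∫⁻ θ in Set.Ioc 0 (2 * π), (‖G w θ‖₊ : ENNReal)) =
      ENNReal.ofReal (r * (creal w * r ^ Jee i' k w)) * ENNReal.ofReal (2 * π) := by
    intro w
    have h1 : ∀ θ : ℝ, (‖G w θ‖₊ : ENNReal) =
        ENNReal.ofReal (r * (creal w * r ^ Jee i' k w)) := fun θ => by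
      rw [← hGnorm w θ, ofReal_norm]; rfl
    rw [lintegral_congr h1, MeasureTheory.setLIntegral_const, Real.volume_Ioc, sub_zero]
  have hbound : (∑' w : (ℕ × ℕ) × ℕ, ∫⁻ θ in Set.Ioc 0 (2 * π), (‖G w θ‖₊ : ENNReal)) ≠ ⊤ := by
    rw [tsum_congr hGlint, ENNReal.tsum_mul_right,
      ← ENNReal.ofReal_tsum_of_nonneg
        (fun w => mul_nonneg hr0.le (mul_nonneg (hcnn w) (zpow_nonneg hr0.le _)))
        (hM.mul_left r)]
    exact ENNReal.mul_ne_top ENNReal.ofReal_ne_top ENNReal.ofReal_ne_top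
  -- step 1: expand the circle integral as a tsum
  have hps : ∀ θ : ℝ, HasSum (fun w => G w θ)
      (deriv (circleMap 0 r) θ • ((circleMap 0 r θ - (ρ : ℂ)) ^ (-((i' + 1 : ℕ) : ℤ)) *
        circleMap 0 r θ ^ (-(k : ℤ)) * Complex.exp ((a : ℂ) / circleMap 0 r θ) *
        Complex.exp ((b : ℂ) * circleMap 0 r θ))) := fun θ => by
    have := (hasSum_term i' k ρ a b r hρ0 hρr ha hb (circleMap 0 r θ) (hcm θ)).mul_left
      (deriv (circleMap 0 r) θ)
    simpa [hG, smul_eq_mul] using this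
  have hstep1 : (∮ p in C(0, r), (p - (ρ : ℂ)) ^ (-((i' + 1 : ℕ) : ℤ)) * p ^ (-(k : ℤ)) *
        Complex.exp ((a : ℂ) / p) * Complex.exp ((b : ℂ) * p)) =
      ∑' w : (ℕ × ℕ) × ℕ, ∫ θ in Set.Ioc 0 (2 * π), G w θ := by
    rw [circleIntegral, intervalIntegral.integral_of_le (by positivity)]
    rw [show (fun θ : ℝ => deriv (circleMap 0 r) θ •
        ((circleMap 0 r θ - (ρ : ℂ)) ^ (-((i' + 1 : ℕ) : ℤ)) *
          circleMap 0 r θ ^ (-(k : ℤ)) * Complex.exp ((a : ℂ) / circleMap 0 r θ) *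
          Complex.exp ((b : ℂ) * circleMap 0 r θ))) = fun θ => ∑' w, G w θ from
      funext fun θ => (hps θ).tsum_eq.symm]
    exact MeasureTheory.integral_tsum hGmeas hbound
  -- step 2: evaluate each term
  have hstep2 : ∀ w, (∫ θ in Set.Ioc 0 (2 * π), G w θ) =
      if Jee i' k w = -1 then Jcc i' ρ a b w * (2 * Real.pi * Complex.I) else 0 := by
    intro w
    rw [← integral_term i' k ρ a b r hr0 w, circleIntegral,
      intervalIntegral.integral_of_le (by positivity : (0:ℝ) ≤ 2 * π)]
  rw [hstep1, tsum_congr hstep2, ← tsum_mul_left]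
  -- step 3: simplify coefficients
  have hstep3 : ∀ w : (ℕ × ℕ) × ℕ, (2 * Real.pi * Complex.I)⁻¹ *
      (if Jee i' k w = -1 then Jcc i' ρ a b w * (2 * Real.pi * Complex.I) else 0) =
      if Jee i' k w = -1 then Jcc i' ρ a b w else 0 := by
    intro w
    split_ifs with h
    · rw [mul_comm (Jcc i' ρ a b w), ← mul_assoc,
        inv_mul_cancel₀ Complex.two_pi_I_ne_zero, one_mul]
    · rw [mul_zero]
  rw [tsum_congr hstep3]
  -- step 4: collapse the tsum along the injection
  have hinj : Function.Injective (fun q : ℕ × ℕ => ((q, q.1 + q.2 + k + i') : (ℕ × ℕ) × ℕ)) :=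
    fun q1 q2 h => (Prod.ext_iff.mp h).1
  have hsupp : Function.support (fun w : (ℕ × ℕ) × ℕ =>
      if Jee i' k w = -1 then Jcc i' ρ a b w else 0) ⊆
      Set.range (fun q : ℕ × ℕ => ((q, q.1 + q.2 + k + i') : (ℕ × ℕ) × ℕ)) := by
    intro w hw
    simp only [Function.mem_support] at hw
    have he : Jee i' k w = -1 := by
      by_contra h; rw [if_neg h] at hw; exact hw rfl
    have hw2 : w.2 = w.1.1 + w.1.2 + k + i' := by
      simp only [Jee] at he; omega
    exact ⟨w.1, by show (w.1, w.1.1 + w.1.2 + k + i') = w; rw [← hw2]⟩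
  rw [← Function.Injective.tsum_eq hinj hsupp]
  refine tsum_congr fun q => ?_
  have he : Jee i' k ((q, q.1 + q.2 + k + i') : (ℕ × ℕ) × ℕ) = -1 := by
    simp only [Jee]; omega
  rw [if_pos he, Jcc_eq_ofReal]

lemma Jterm_nonneg (i' k : ℕ) (ρ a b : ℝ) (hρ : 0 ≤ ρ) (ha : 0 ≤ a) (hb : 0 ≤ b)
    (q : ℕ × ℕ) : 0 ≤ Jterm i' k ρ a b q := by
  simp only [Jterm]; positivity

lemma summable_Jterm (i' k : ℕ) (ρ a b : ℝ) (hρ : 0 ≤ ρ) (ha : 0 ≤ a) (hb : 0 ≤ b) :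
    Summable (Jterm i' k ρ a b) := by
  have hBsum : Summable (fun q : ℕ × ℕ =>
      (2 ^ i' * b ^ (k + i') / (Nat.factorial (k + i') : ℝ)) *
        ((2 * ρ * b) ^ q.1 / (Nat.factorial q.1 : ℝ) *
          ((a * b) ^ q.2 / (Nat.factorial q.2 : ℝ)))) := by
    apply Summable.mul_left
    have h1 : Summable fun m : ℕ => (2 * ρ * b) ^ m / (Nat.factorial m : ℝ) :=
      Real.summable_pow_div_factorial _
    have h2 : Summable fun j : ℕ => (a * b) ^ j / (Nat.factorial j : ℝ) :=
      Real.summable_pow_div_factorial _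
    exact h1.mul_of_nonneg h2 (fun m => by positivity) (fun j => by positivity)
  refine Summable.of_nonneg_of_le (Jterm_nonneg i' k ρ a b hρ ha hb) (fun q => ?_) hBsum
  obtain ⟨m, j⟩ := q
  -- choose bound
  have hch : ((m + i').choose i' : ℝ) ≤ 2 ^ i' * 2 ^ m := by
    have h1 : (m + i').choose i' ≤ 2 ^ (m + i') := by
      calc (m + i').choose i' ≤ ∑ t ∈ Finset.range (m + i' + 1), (m + i').choose t :=
            Finset.single_le_sum (fun t _ => Nat.zero_le _) (Finset.mem_range.mpr (by omega))
        _ = 2 ^ (m + i') := Nat.sum_range_choose (m + i')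
    calc ((m + i').choose i' : ℝ) ≤ (2 ^ (m + i') : ℕ) := by exact_mod_cast h1
      _ = 2 ^ i' * 2 ^ m := by push_cast [pow_add]; ring
  -- factorial bound
  have hfac : ((Nat.factorial (k + i') : ℝ)) * (Nat.factorial m : ℝ) * (Nat.factorial j : ℝ)
      ≤ (Nat.factorial j : ℝ) * (Nat.factorial (m + j + k + i') : ℝ) := by
    have h1 : Nat.factorial (k + i') * Nat.factorial m ≤ Nat.factorial (m + j + k + i') := by
      apply Nat.le_of_dvd (Nat.factorial_pos _)
      calc Nat.factorial (k + i') * Nat.factorial m ∣ Nat.factorial (k + i' + m) :=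
            Nat.factorial_mul_factorial_dvd_factorial_add _ _
        _ ∣ Nat.factorial (m + j + k + i') :=
            Nat.factorial_dvd_factorial (by omega)
    calc ((Nat.factorial (k + i') : ℝ)) * (Nat.factorial m : ℝ) * (Nat.factorial j : ℝ)
        ≤ ((Nat.factorial (m + j + k + i') : ℝ)) * (Nat.factorial j : ℝ) := by
          apply mul_le_mul_of_nonneg_right _ (by positivity)
          exact_mod_cast h1
      _ = (Nat.factorial j : ℝ) * (Nat.factorial (m + j + k + i') : ℝ) := by ring
  have hJ : Jterm i' k ρ a b (m, j) =
      (((m + i').choose i' : ℝ) * ρ ^ m * a ^ j * b ^ (m + j + k + i')) /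
        ((Nat.factorial j : ℝ) * (Nat.factorial (m + j + k + i') : ℝ)) := by
    simp only [Jterm]; field_simp
  have hBeq : (2 ^ i' * b ^ (k + i') / (Nat.factorial (k + i') : ℝ)) *
        ((2 * ρ * b) ^ m / (Nat.factorial m : ℝ) * ((a * b) ^ j / (Nat.factorial j : ℝ))) =
      (2 ^ i' * 2 ^ m * ρ ^ m * a ^ j * b ^ (m + j + k + i')) /
        ((Nat.factorial (k + i') : ℝ) * (Nat.factorial m : ℝ) * (Nat.factorial j : ℝ)) := by
    rw [show m + j + k + i' = m + (j + (k + i')) from by omega, pow_add b, pow_add b,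
      div_mul_div_comm, div_mul_div_comm, div_eq_div_iff (by positivity) (by positivity)]
    ring
  rw [hJ, hBeq]
  apply div_le_div₀ (by positivity) _ (by positivity) hfac
  have : ρ ^ m * a ^ j * b ^ (m + j + k + i') ≥ 0 := by positivity
  calc ((m + i').choose i' : ℝ) * ρ ^ m * a ^ j * b ^ (m + j + k + i')
      ≤ (2 ^ i' * 2 ^ m) * (ρ ^ m * a ^ j * b ^ (m + j + k + i')) := by
        rw [mul_assoc, mul_assoc, ← mul_assoc (ρ ^ m)]
        exact mul_le_mul_of_nonneg_right hch (by positivity)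
    _ = 2 ^ i' * 2 ^ m * ρ ^ m * a ^ j * b ^ (m + j + k + i') := by ring

lemma rhs_eq (i' k : ℕ) (ρ a b : ℝ) (hρ : 0 ≤ ρ) (ha : 0 ≤ a) (hb : 0 ≤ b) :
    b ^ (k + i') / (Nat.factorial (k + i') : ℝ) *
      Phi3 ((i' + 1 : ℕ) : ℝ) (((k : ℝ) + ((i' + 1 : ℕ) : ℝ))) (ρ * b) (a * b) =
      ∑' q : ℕ × ℕ, Jterm i' k ρ a b q := by
  have hsum := summable_Jterm i' k ρ a b hρ ha hb
  rw [Summable.tsum_prod' hsum fun m => hsum.prod_factor m]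
  rw [Phi3, ← tsum_mul_left]
  refine tsum_congr fun m => ?_
  rw [← tsum_mul_left]
  refine tsum_congr fun n => ?_
  -- per-term identity
  have hP1 : (ascPochhammer ℝ m).eval (((i' + 1 : ℕ) : ℝ)) =
      (((i' + 1).ascFactorial m : ℕ) : ℝ) := (Nat.cast_ascFactorial ℝ (i' + 1) m).symm
  have hP2 : (ascPochhammer ℝ (m + n)).eval (((k : ℝ) + ((i' + 1 : ℕ) : ℝ))) =
      (((k + (i' + 1)).ascFactorial (m + n) : ℕ) : ℝ) := by
    rw [show ((k : ℝ) + ((i' + 1 : ℕ) : ℝ)) = ((k + (i' + 1) : ℕ) : ℝ) from by push_cast; ring]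
    exact (Nat.cast_ascFactorial ℝ (k + (i' + 1)) (m + n)).symm
  have hasc1 : (i' + 1).ascFactorial m = Nat.factorial m * (m + i').choose i' := by
    rw [Nat.ascFactorial_eq_factorial_mul_choose]
    congr 1
    have h := Nat.choose_symm (Nat.le_add_right m i')
    rw [show m + i' - m = i' from by omega] at h
    rw [Nat.add_comm i' m, ← h]
  have hasc2 : Nat.factorial (k + i') * ((k + (i' + 1)).ascFactorial (m + n)) =
      Nat.factorial (m + n + k + i') := by
    rw [show k + (i' + 1) = (k + i') + 1 from by omega,
      Nat.factorial_mul_ascFactorial (k + i') (m + n),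
      show k + i' + (m + n) = m + n + k + i' from by omega]
  have hKne : ((Nat.factorial (k + i') : ℝ)) ≠ 0 := by
    exact_mod_cast (Nat.factorial_pos _).ne'
  have hAval : (((k + (i' + 1)).ascFactorial (m + n) : ℕ) : ℝ) =
      ((Nat.factorial (m + n + k + i') : ℝ)) / ((Nat.factorial (k + i') : ℝ)) := by
    rw [eq_div_iff hKne, mul_comm]
    exact_mod_cast congrArg (Nat.cast (R := ℝ)) hasc2
  rw [hP1, hP2, hAval, hasc1, Jterm]
  have h1 : ((Nat.factorial m : ℝ)) ≠ 0 := by exact_mod_cast (Nat.factorial_pos _).ne'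
  have h2 : ((Nat.factorial n : ℝ)) ≠ 0 := by exact_mod_cast (Nat.factorial_pos _).ne'
  have h3 : ((Nat.factorial (m + n + k + i') : ℝ)) ≠ 0 := by
    exact_mod_cast (Nat.factorial_pos _).ne'
  push_cast
  rw [show m + n + k + i' = m + (n + (k + i')) from by omega, pow_add b, pow_add b]
  field_simp
  ring

end JikAux

theorem Jik_eq_Phi3 (i k : ℕ) (hi : 1 ≤ i) (ρ : ℝ) (hρ : ρ ∈ Set.Ioo (0 : ℝ) 1)
    (u γ δ : ℝ) (hu : 0 ≤ u) (r : ℝ) (hr₀ : ρ < r) (hr₁ : r < 1) :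
    Jik i k u γ δ ρ r =
      (((δ ^ 2 / 2) ^ (k + i - 1) / Real.Gamma (k + i) *
          Phi3 i (k + i) (ρ * δ ^ 2 / 2) (u ^ 2 / 2 * (γ ^ 2 * δ ^ 2 / 2)) : ℝ) : ℂ) := by
  obtain ⟨i', rfl⟩ : ∃ i', i = i' + 1 := ⟨i - 1, by omega⟩
  obtain ⟨hρ0, hρ1⟩ := hρ
  set a : ℝ := u ^ 2 * γ ^ 2 / 2 with ha_def
  set b : ℝ := δ ^ 2 / 2 with hb_def
  have ha : 0 ≤ a := by positivity
  have hb : 0 ≤ b := by positivity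
  have hfun : (fun p : ℂ => (p - (ρ : ℂ)) ^ (-((i' + 1 : ℕ) : ℤ)) * p ^ (-(k : ℤ)) *
        Complex.exp ((u : ℂ) ^ 2 * (γ : ℂ) ^ 2 / (2 * p)) * Complex.exp ((δ : ℂ) ^ 2 * p / 2)) =
      (fun p : ℂ => (p - (ρ : ℂ)) ^ (-((i' + 1 : ℕ) : ℤ)) * p ^ (-(k : ℤ)) *
        Complex.exp ((a : ℂ) / p) * Complex.exp ((b : ℂ) * p)) := by
    funext p
    have h1 : (a : ℂ) / p = (u : ℂ) ^ 2 * (γ : ℂ) ^ 2 / (2 * p) := by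
      rw [ha_def]; push_cast; ring
    have h2 : (b : ℂ) * p = (δ : ℂ) ^ 2 * p / 2 := by
      rw [hb_def]; push_cast; ring
    rw [h1, h2]
  have key := JikAux.lhs_eq i' k ρ a b r hρ0 hr₀ ha hb
  rw [Jik, hfun, key, ← Complex.ofReal_tsum, ← JikAux.rhs_eq i' k ρ a b (le_of_lt hρ0) ha hb]
  norm_cast
  have hfac : Real.Gamma ((k + (i' + 1) : ℕ) : ℝ) = (Nat.factorial (k + i') : ℝ) := by
    have : ((k + (i' + 1) : ℕ) : ℝ) = ((k + i' : ℕ) : ℝ) + 1 := by push_cast; ring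
    rw [this, Real.Gamma_nat_eq_factorial]
  have hx : ρ * δ ^ 2 / 2 = ρ * b := by rw [hb_def]; ring
  have hy : u ^ 2 / 2 * (γ ^ 2 * δ ^ 2 / 2) = a * b := by rw [ha_def, hb_def]; ring
  rw [hfac, hx, hy, show k + (i' + 1) - 1 = k + i' from by omega]
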